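/- If the ξ(k), k ∈ ℤ, are i.i.d. Bernoulli(1/2) random variables, then the increments (R(k+1) − R(k))_{k∈ℤ} of the representation R of ξ as a nearest-neighbor walk are i.i.d. uniform on {−1, +1}; equivalently, (R(k))_{k≥0} and (R(−k))_{k≥0} are two independent simple random walks on ℤ starting at the origin. -/

import Mathlib

open MeasureTheory ProbabilityTheory

/-- The 4-periodic scenery with pattern `(b, b, !b, !b)` at `(0, 1, 2, 3)`. -/
def phiOf (b : Bool) : ℤ → Bool :=
  fun k => if k % 4 = 0 ∨ k % 4 = 1 then b else !b

section Aux

variable {Ω : Type*}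

lemma phiOf_add_two (b : Bool) (r : ℤ) : phiOf b (r + 2) = !(phiOf b r) := by
  have h4 : r % 4 = 0 ∨ r % 4 = 1 ∨ r % 4 = 2 ∨ r % 4 = 3 := by omega
  rcases h4 with h | h | h | h
  · have h2 : (r + 2) % 4 = 2 := by omega
    simp [phiOf, h, h2]
  · have h2 : (r + 2) % 4 = 3 := by omega
    simp [phiOf, h, h2]
  · have h2 : (r + 2) % 4 = 0 := by omega
    simp [phiOf, h, h2]
  · have h2 : (r + 2) % 4 = 1 := by omega
    simp [phiOf, h, h2]

lemma phiOf_add_one_even (b : Bool) (r : ℤ) (h : r % 2 = 0) :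
    phiOf b (r + 1) = phiOf b r := by
  have h4 : r % 4 = 0 ∨ r % 4 = 2 := by omega
  rcases h4 with h' | h'
  · have h2 : (r + 1) % 4 = 1 := by omega
    simp [phiOf, h', h2]
  · have h2 : (r + 1) % 4 = 3 := by omega
    simp [phiOf, h', h2]

lemma phiOf_add_one_odd (b : Bool) (r : ℤ) (h : r % 2 = 1) :
    phiOf b (r + 1) = !(phiOf b r) := by
  have h4 : r % 4 = 1 ∨ r % 4 = 3 := by omega
  rcases h4 with h' | h'
  · have h2 : (r + 1) % 4 = 2 := by omega
    simp [phiOf, h', h2]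
  · have h2 : (r + 1) % 4 = 0 := by omega
    simp [phiOf, h', h2]

lemma R_parity {R : ℤ → ℤ} (h0 : R 0 = 0) (h : ∀ k : ℤ, |R (k + 1) - R k| = 1) :
    ∀ k : ℤ, R k % 2 = k % 2 := by
  have step : ∀ k : ℤ, R (k + 1) = R k + 1 ∨ R (k + 1) = R k - 1 := by
    intro k
    have h1 := h k
    rcases (abs_eq (by norm_num : (0:ℤ) ≤ 1)).mp h1 with h' | h' <;> omega
  intro k
  induction k using Int.induction_on with
  | zero => simp [h0]
  | succ n ih =>
      have := step n
      omega
  | pred n ih =>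
      have hst := step (-(n : ℤ) - 1)
      have e : (-(n : ℤ) - 1) + 1 = -(n : ℤ) := by ring
      rw [e] at hst
      omega

lemma increment_eq (ξ : Ω → ℤ → Bool) (R : Ω → ℤ → ℤ)
    (hR0 : ∀ ω, R ω 0 = 0)
    (hRnn : ∀ ω, ∀ k : ℤ, |R ω (k + 1) - R ω k| = 1)
    (hRrep : ∀ ω, ∀ k : ℤ, phiOf (ξ ω 0) (R ω k) = ξ ω k) (ω : Ω) (k : ℤ) :
    R ω (k + 1) - R ω k
      = if xor (ξ ω k) (ξ ω (k + 1)) = decide (k % 2 = 1) then 1 else -1 := by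
  have hpar : R ω k % 2 = k % 2 := R_parity (hR0 ω) (hRnn ω) k
  have hk : phiOf (ξ ω 0) (R ω k) = ξ ω k := hRrep ω k
  have hk1 : phiOf (ξ ω 0) (R ω (k + 1)) = ξ ω (k + 1) := hRrep ω (k + 1)
  have hstep : R ω (k + 1) = R ω k + 1 ∨ R ω (k + 1) = R ω k - 1 := by
    have h1 := hRnn ω k
    rcases (abs_eq (by norm_num : (0:ℤ) ≤ 1)).mp h1 with h' | h' <;> omega
  have key : xor (ξ ω k) (phiOf (ξ ω 0) (R ω k + 1)) = decide (k % 2 = 1) := by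
    rcases Int.emod_two_eq_zero_or_one k with h2 | h2
    · rw [phiOf_add_one_even _ _ (hpar.trans h2), hk]
      have hd : decide (k % 2 = 1) = false := by
        simp [h2]
      simp [hd]
    · rw [phiOf_add_one_odd _ _ (hpar.trans h2), hk]
      have hd : decide (k % 2 = 1) = true := by
        simp [h2]
      simp [hd]
  rcases hstep with h | h
  · have hx : xor (ξ ω k) (ξ ω (k + 1)) = decide (k % 2 = 1) := by
      rw [← hk1, h]; exact key
    rw [h, if_pos hx]; ring
  · have hφ : phiOf (ξ ω 0) (R ω k - 1) = !(phiOf (ξ ω 0) (R ω k + 1)) := by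
      have h2 := phiOf_add_two (ξ ω 0) (R ω k - 1)
      rw [show R ω k - 1 + 2 = R ω k + 1 by ring] at h2
      rw [h2, Bool.not_not]
    have hx : xor (ξ ω k) (ξ ω (k + 1)) = !(decide (k % 2 = 1)) := by
      rw [← hk1, h, hφ, ← key]
      cases ξ ω k <;> cases phiOf (ξ ω 0) (R ω k + 1) <;> rfl
    rw [h, if_neg (by rw [hx]; exact Bool.not_ne_self _)]; ring

lemma comap_bool (f : Ω → Bool) :
    MeasurableSpace.comap f ⊤ = MeasurableSpace.generateFrom {{ω | f ω = true}} := by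
  refine le_antisymm ?_ ?_
  · rintro s ⟨A, -, rfl⟩
    have hA : A = ∅ ∨ A = {true} ∨ A = {false} ∨ A = Set.univ := by
      by_cases ht : true ∈ A <;> by_cases hf : false ∈ A
      · right; right; right; ext b; cases b <;> simp [ht, hf]
      · right; left; ext b; cases b <;> simp [ht, hf]
      · right; right; left; ext b; cases b <;> simp [ht, hf]
      · left; ext b; cases b <;> simp [ht, hf]
    rcases hA with rfl | rfl | rfl | rfl
    · rw [Set.preimage_empty]
      exact @MeasurableSet.empty Ω (MeasurableSpace.generateFrom {{ω | f ω = true}})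
    · exact MeasurableSpace.measurableSet_generateFrom (Set.mem_singleton _)
    · have hc : f ⁻¹' {false} = {ω | f ω = true}ᶜ := by
        ext ω; cases h : f ω <;> simp [h]
      rw [hc]
      exact (MeasurableSpace.measurableSet_generateFrom (Set.mem_singleton _)).compl
    · rw [Set.preimage_univ]
      exact @MeasurableSet.univ Ω (MeasurableSpace.generateFrom {{ω | f ω = true}})
  · refine MeasurableSpace.generateFrom_le ?_
    rintro t (rfl : t = _)
    exact ⟨{true}, trivial, rfl⟩

lemma measurable_xor [MeasurableSpace Ω] {f g : Ω → Bool}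
    (hf : Measurable f) (hg : Measurable g) :
    Measurable fun ω => xor (f ω) (g ω) := by
  have h : (fun ω => xor (f ω) (g ω)) = fun ω => if f ω = true then !(g ω) else g ω := by
    funext ω; cases h : f ω <;> simp [h]
  rw [h]
  have hng : Measurable fun ω => !(g ω) := (measurable_from_top (f := not)).comp hg
  exact Measurable.ite (hf (measurableSet_singleton true)) hng hg

lemma core_xor [MeasurableSpace Ω] (P : Measure Ω) [IsProbabilityMeasure P]
    (ξ : Ω → ℤ → Bool)
    (hξmeas : ∀ k : ℤ, Measurable fun ω => ξ ω k)
    (hξindep : iIndepFun (fun k ω => ξ ω k) P)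
    (hξbern : ∀ k : ℤ, P {ω | ξ ω k = true} = 1 / 2)
    (s : Finset ℤ) :
    P (⋂ k ∈ s, {ω | xor (ξ ω k) (ξ ω (k + 1)) = true}) = (1 / 2) ^ s.card := by
  have hbern' : ∀ j : ℤ, P {ω | ξ ω j = false} = 1 / 2 := by
    intro j
    have hc : {ω | ξ ω j = false} = {ω | ξ ω j = true}ᶜ := by
      ext ω; cases h : ξ ω j <;> simp [h]
    have hm : MeasurableSet {ω | ξ ω j = true} := hξmeas j (measurableSet_singleton true)
    rw [hc, measure_compl hm (measure_ne_top P _), measure_univ, hξbern]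
    exact ENNReal.sub_half ENNReal.one_ne_top
  induction s using Finset.induction_on_max with
  | empty => simp
  | insert a s hlt ih =>
    have hanot : a ∉ s := fun h => lt_irrefl a (hlt a h)
    set M : ℤ → MeasurableSpace Ω :=
      fun j => MeasurableSpace.comap (fun ω => ξ ω j) inferInstance with hM
    have hMle : ∀ j, M j ≤ ‹MeasurableSpace Ω› := fun j => (hξmeas j).comap_le
    have hiI : iIndep M P := (iIndepFun_iff_iIndep _ _ P).mp hξindep
    have hdisj : Disjoint {j : ℤ | j ≤ a} ({a + 1} : Set ℤ) := by
      rw [Set.disjoint_left]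
      intro j hj hj'
      simp only [Set.mem_setOf_eq] at hj
      simp only [Set.mem_singleton_iff] at hj'
      omega
    have hind := indep_iSup_of_disjoint hMle hiI hdisj
    have hmemM : ∀ (j : ℤ) (v : Bool), MeasurableSet[M j] {ω | ξ ω j = v} := by
      intro j v
      exact ⟨{v}, trivial, rfl⟩
    have hA : ∀ (j : ℤ) (v : Bool), j ≤ a →
        MeasurableSet[⨆ j ∈ {j : ℤ | j ≤ a}, M j] {ω | ξ ω j = v} :=
      fun j v hj => le_biSup M (show j ∈ {j : ℤ | j ≤ a} from hj) _ (hmemM j v)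
    have hXsetM : ∀ k : ℤ, k < a →
        MeasurableSet[⨆ j ∈ {j : ℤ | j ≤ a}, M j] {ω | xor (ξ ω k) (ξ ω (k + 1)) = true} := by
      intro k hk
      have hd : {ω | xor (ξ ω k) (ξ ω (k + 1)) = true}
          = ({ω | ξ ω k = true} ∩ {ω | ξ ω (k + 1) = false})
            ∪ ({ω | ξ ω k = false} ∩ {ω | ξ ω (k + 1) = true}) := by
        ext ω
        cases h1 : ξ ω k <;> cases h2 : ξ ω (k + 1) <;> simp [h1, h2]
      rw [hd]
      exact ((hA k true hk.le).inter (hA (k + 1) false (by omega))).union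
        ((hA k false hk.le).inter (hA (k + 1) true (by omega)))
    have hE'M : MeasurableSet[⨆ j ∈ {j : ℤ | j ≤ a}, M j]
        (⋂ k ∈ s, {ω | xor (ξ ω k) (ξ ω (k + 1)) = true}) :=
      Finset.measurableSet_biInter s fun k hk => hXsetM k (hlt k hk)
    have hindep_eval : ∀ t1 t2 : Set Ω,
        MeasurableSet[⨆ j ∈ {j : ℤ | j ≤ a}, M j] t1 → MeasurableSet[M (a + 1)] t2 →
        P (t1 ∩ t2) = P t1 * P t2 := by
      intro t1 t2 h1 h2
      exact (Indep_iff _ _ P).mp hind t1 t2 h1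
        (le_biSup M (Set.mem_singleton _) _ h2)
    set E' := ⋂ k ∈ s, {ω | xor (ξ ω k) (ξ ω (k + 1)) = true} with hE'
    rw [Finset.set_biInter_insert]
    have hsplit : {ω | xor (ξ ω a) (ξ ω (a + 1)) = true} ∩ E'
        = ((E' ∩ {ω | ξ ω a = true}) ∩ {ω | ξ ω (a + 1) = false})
          ∪ ((E' ∩ {ω | ξ ω a = false}) ∩ {ω | ξ ω (a + 1) = true}) := by
      ext ω
      simp only [Set.mem_inter_iff, Set.mem_union, Set.mem_setOf_eq]
      cases h1 : ξ ω a <;> cases h2 : ξ ω (a + 1) <;> simp [h1, h2]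
    have hmeasξ : ∀ (j : ℤ) (v : Bool), MeasurableSet {ω | ξ ω j = v} :=
      fun j v => hξmeas j (measurableSet_singleton v)
    have hE'meas : MeasurableSet E' := (iSup₂_le fun j _ => hMle j) _ hE'M
    have hdisj2 : Disjoint ((E' ∩ {ω | ξ ω a = true}) ∩ {ω | ξ ω (a + 1) = false})
        ((E' ∩ {ω | ξ ω a = false}) ∩ {ω | ξ ω (a + 1) = true}) := by
      rw [Set.disjoint_left]
      intro ω h1 h2
      have e1 : ξ ω a = true := h1.1.2
      have e2 : ξ ω a = false := h2.1.2
      rw [e1] at e2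
      exact Bool.noConfusion e2
    have hterm : ∀ v w : Bool,
        P ((E' ∩ {ω | ξ ω a = v}) ∩ {ω | ξ ω (a + 1) = w})
          = P (E' ∩ {ω | ξ ω a = v}) * (1 / 2) := by
      intro v w
      rw [hindep_eval _ _ (hE'M.inter (hA a v le_rfl)) (hmemM (a + 1) w)]
      congr 1
      cases w
      · exact hbern' _
      · exact hξbern _
    rw [hsplit, measure_union hdisj2 ((hE'meas.inter (hmeasξ a false)).inter (hmeasξ (a + 1) true)),
      hterm, hterm, ← add_mul]
    have hc : {ω | ξ ω a = false} = {ω | ξ ω a = true}ᶜ := by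
      ext ω; cases h : ξ ω a <;> simp [h]
    have hsum : P (E' ∩ {ω | ξ ω a = true}) + P (E' ∩ {ω | ξ ω a = false}) = P E' := by
      rw [hc, ← Set.diff_eq]
      exact measure_inter_add_diff E' (hmeasξ a true)
    rw [hsum, ih, Finset.card_insert_of_notMem hanot, pow_succ]

end Aux

/-- If the `ξ k` are i.i.d. Bernoulli(1/2), then the increments of the representation `R`
of `ξ` as a nearest-neighbor walk are i.i.d. uniform on `{-1, +1}`; equivalently,
`(R k)_{k ≥ 0}` and `(R (-k))_{k ≥ 0}` are two independent simple random walks starting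
at the origin. -/
theorem representation_is_srw
    {Ω : Type*} [MeasurableSpace Ω] (P : Measure Ω) [IsProbabilityMeasure P]
    (ξ : Ω → ℤ → Bool)
    (hξmeas : ∀ k : ℤ, Measurable fun ω => ξ ω k)
    (hξindep : iIndepFun (fun k ω => ξ ω k) P)
    (hξbern : ∀ k : ℤ, P {ω | ξ ω k = true} = 1 / 2)
    (R : Ω → ℤ → ℤ)
    (hR0 : ∀ ω, R ω 0 = 0)
    (hRnn : ∀ ω, ∀ k : ℤ, |R ω (k + 1) - R ω k| = 1)
    (hRrep : ∀ ω, ∀ k : ℤ, phiOf (ξ ω 0) (R ω k) = ξ ω k) :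
    iIndepFun (fun k ω => R ω (k + 1) - R ω k) P ∧
      ∀ k : ℤ, P {ω | R ω (k + 1) - R ω k = 1} = 1 / 2 ∧
        P {ω | R ω (k + 1) - R ω k = -1} = 1 / 2 := by
  have hXmeas : ∀ k : ℤ, Measurable fun ω => xor (ξ ω k) (ξ ω (k + 1)) :=
    fun k => measurable_xor (hξmeas k) (hξmeas (k + 1))
  have hXtrue : ∀ k : ℤ, P {ω | xor (ξ ω k) (ξ ω (k + 1)) = true} = 1 / 2 := by
    intro k
    simpa using core_xor P ξ hξmeas hξindep hξbern {k}
  have hXfalse : ∀ k : ℤ, P {ω | xor (ξ ω k) (ξ ω (k + 1)) = false} = 1 / 2 := by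
    intro k
    have hc : {ω | xor (ξ ω k) (ξ ω (k + 1)) = false}
        = {ω | xor (ξ ω k) (ξ ω (k + 1)) = true}ᶜ := by
      ext ω; cases h : xor (ξ ω k) (ξ ω (k + 1)) <;> simp [h]
    have hm : MeasurableSet {ω | xor (ξ ω k) (ξ ω (k + 1)) = true} :=
      hXmeas k (measurableSet_singleton true)
    rw [hc, measure_compl hm (measure_ne_top P _), measure_univ, hXtrue]
    exact ENNReal.sub_half ENNReal.one_ne_top
  have hXval : ∀ (k : ℤ) (c : Bool), P {ω | xor (ξ ω k) (ξ ω (k + 1)) = c} = 1 / 2 := by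
    intro k c; cases c
    · exact hXfalse k
    · exact hXtrue k
  have hpi : iIndepSets
      (fun k : ℤ => ({{ω | xor (ξ ω k) (ξ ω (k + 1)) = true}} : Set (Set Ω))) P := by
    rw [iIndepSets_iff]
    intro s f hf
    have hfe : ∀ i ∈ s, f i = {ω | xor (ξ ω i) (ξ ω (i + 1)) = true} := fun i hi => hf i hi
    have h1 : (⋂ i ∈ s, f i) = ⋂ i ∈ s, {ω | xor (ξ ω i) (ξ ω (i + 1)) = true} :=
      Set.iInter₂_congr hfe
    rw [h1, core_xor P ξ hξmeas hξindep hξbern s,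
      Finset.prod_congr rfl (fun i hi => by rw [hfe i hi, hXtrue i]), Finset.prod_const]
  have hXindep : iIndepFun
      (fun k ω => xor (ξ ω k) (ξ ω (k + 1))) P := by
    rw [iIndepFun_iff_iIndep (fun _ => inferInstance)]
    exact iIndepSets.iIndep (fun k => (hXmeas k).comap_le) _
      (fun k => IsPiSystem.singleton _)
      (fun k => comap_bool fun ω => xor (ξ ω k) (ξ ω (k + 1))) hpi
  have hDfun : (fun (k : ℤ) (ω : Ω) => R ω (k + 1) - R ω k)
      = fun k => (fun b : Bool => if b = decide (k % 2 = 1) then (1 : ℤ) else -1)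
          ∘ (fun ω => xor (ξ ω k) (ξ ω (k + 1))) := by
    funext k ω
    exact increment_eq ξ R hR0 hRnn hRrep ω k
  constructor
  · rw [hDfun]
    exact hXindep.comp _ fun k => measurable_from_top
  · intro k
    have h1 : {ω | R ω (k + 1) - R ω k = 1}
        = {ω | xor (ξ ω k) (ξ ω (k + 1)) = decide (k % 2 = 1)} := by
      ext ω
      simp only [Set.mem_setOf_eq]
      rw [increment_eq ξ R hR0 hRnn hRrep ω k]
      constructor
      · intro h
        by_contra hc
        rw [if_neg hc] at h
        norm_num at h
      · intro h; rw [if_pos h]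
    have h2 : {ω | R ω (k + 1) - R ω k = -1}
        = {ω | xor (ξ ω k) (ξ ω (k + 1)) = !decide (k % 2 = 1)} := by
      ext ω
      simp only [Set.mem_setOf_eq]
      rw [increment_eq ξ R hR0 hRnn hRrep ω k]
      constructor
      · intro h
        by_cases hc : xor (ξ ω k) (ξ ω (k + 1)) = decide (k % 2 = 1)
        · rw [if_pos hc] at h; norm_num at h
        · cases hx : xor (ξ ω k) (ξ ω (k + 1)) <;>
            cases hd : decide (k % 2 = 1) <;> simp_all
      · intro h
        rw [if_neg (by rw [h]; exact Bool.not_ne_self _)]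
    exact ⟨by rw [h1]; exact hXval k _, by rw [h2]; exact hXval k _⟩
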